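/- Let P ⊆ ℝ^d be a full-dimensional lattice polytope with codegree a. If P is nearly Gorenstein, then every lattice point of P decomposes, i.e. P ∩ ℤ^d = (⌊aP⌋ ∩ ℤ^d) + ({P} ∩ ℤ^d). -/

import Mathlib

open Set Pointwise

/-- The set of lattice points of `ℝ^d`. -/
def latticePoints (d : ℕ) : Set (Fin d → ℝ) :=
  {x | ∀ i, ∃ z : ℤ, x i = (z : ℝ)}

/-- A lattice polytope: the convex hull of a finite set of lattice points. -/
def IsLatticePolytope {d : ℕ} (P : Set (Fin d → ℝ)) : Prop :=
  ∃ V : Finset (Fin d → ℝ), (V : Set (Fin d → ℝ)) ⊆ latticePoints d ∧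
    P = convexHull ℝ (V : Set (Fin d → ℝ))

/-- The natural pairing of an integral linear functional with a point of `ℝ^d`. -/
def pairing {d : ℕ} (n : Fin d → ℤ) (x : Fin d → ℝ) : ℝ :=
  ∑ i, (n i : ℝ) * x i

/-- `P = {x | n_F(x) ≥ -h_F}` is an irredundant presentation with primitive
integral inner normals, i.e. the facet presentation of `P`. -/
def IsFacetPresentation {d m : ℕ} (P : Set (Fin d → ℝ))
    (n : Fin m → Fin d → ℤ) (h : Fin m → ℤ) : Prop :=
  P = {x | ∀ i, pairing (n i) x ≥ -(h i : ℝ)} ∧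
  (∀ i, Finset.univ.gcd (n i) = 1) ∧
  (∀ i, ∃ x : Fin d → ℝ, pairing (n i) x < -(h i : ℝ) ∧
    ∀ j, j ≠ i → pairing (n j) x ≥ -(h j : ℝ))

/-- `a` is the codegree of `P`: the least `k ≥ 1` such that `int(kP)` contains
a lattice point. -/
def IsCodegree {d : ℕ} (P : Set (Fin d → ℝ)) (a : ℕ) : Prop :=
  1 ≤ a ∧ (interior ((a : ℝ) • P) ∩ latticePoints d).Nonempty ∧
    ∀ k : ℕ, 1 ≤ k → (interior ((k : ℝ) • P) ∩ latticePoints d).Nonempty → a ≤ k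

/-- The floor polytope `⌊R⌋ = conv(int(R) ∩ ℤ^d)`. -/
def floorPoly {d : ℕ} (R : Set (Fin d → ℝ)) : Set (Fin d → ℝ) :=
  convexHull ℝ (interior R ∩ latticePoints d)

/-- The remainder polytope `{P} = conv{x ∈ ℤ^d | n_F(x) ≥ (a-1)h_F - 1}`,
defined in terms of the facet presentation data and the codegree `a`. -/
def remPoly {d m : ℕ} (n : Fin m → Fin d → ℤ) (h : Fin m → ℤ) (a : ℕ) :
    Set (Fin d → ℝ) :=
  convexHull ℝ {x | x ∈ latticePoints d ∧
    ∀ i, pairing (n i) x ≥ ((a : ℝ) - 1) * (h i : ℝ) - 1}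

/-- The cone `C_P ⊆ ℝ^d × ℝ` over `P`, in terms of the facet presentation. -/
def coneOver {d m : ℕ} (n : Fin m → Fin d → ℤ) (h : Fin m → ℤ) :
    Set ((Fin d → ℝ) × ℝ) :=
  {p | ∀ i, pairing (n i) p.1 ≥ -(p.2 * (h i : ℝ))}

/-- The interior `int(C_P)` of the cone over `P`. -/
def intCone {d m : ℕ} (n : Fin m → Fin d → ℤ) (h : Fin m → ℤ) :
    Set ((Fin d → ℝ) × ℝ) :=
  {p | ∀ i, pairing (n i) p.1 > -(p.2 * (h i : ℝ))}

/-- The anticanonical set `ant(C_P)` of the cone over `P`. -/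
def antCone {d m : ℕ} (n : Fin m → Fin d → ℤ) (h : Fin m → ℤ) :
    Set ((Fin d → ℝ) × ℝ) :=
  {p | ∀ i, pairing (n i) p.1 ≥ -(p.2 * (h i : ℝ)) - 1}

/-- Lattice points of `ℝ^d × ℝ = ℝ^{d+1}`. -/
def latticePairs (d : ℕ) : Set ((Fin d → ℝ) × ℝ) :=
  {p | p.1 ∈ latticePoints d ∧ ∃ z : ℤ, p.2 = (z : ℝ)}

/-- The nearly Gorenstein condition with respect to a given facet presentation:
`(C_P ∩ ℤ^{d+1}) \ {0} ⊆ (int(C_P) ∩ ℤ^{d+1}) + (ant(C_P) ∩ ℤ^{d+1})`. -/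
def NGIncl {d m : ℕ} (n : Fin m → Fin d → ℤ) (h : Fin m → ℤ) : Prop :=
  (coneOver n h ∩ latticePairs d) \ {(0 : (Fin d → ℝ) × ℝ)} ⊆
    (intCone n h ∩ latticePairs d) + (antCone n h ∩ latticePairs d)

/-- A full-dimensional lattice polytope is nearly Gorenstein if the nearly
Gorenstein inclusion holds for its facet presentation. -/
def NearlyGorenstein {d : ℕ} (P : Set (Fin d → ℝ)) : Prop :=
  ∃ (m : ℕ) (n : Fin m → Fin d → ℤ) (h : Fin m → ℤ),
    IsFacetPresentation P n h ∧ NGIncl n h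

/-- The polar dual `Q* = {y | y(x) ≥ -1 for all x ∈ Q}`. -/
def polarDual {d : ℕ} (Q : Set (Fin d → ℝ)) : Set (Fin d → ℝ) :=
  {y | ∀ x ∈ Q, (∑ i, y i * x i) ≥ -1}

/-- A reflexive polytope: a lattice polytope with `0` in its interior whose
polar dual is again a lattice polytope. -/
def IsReflexive {d : ℕ} (Q : Set (Fin d → ℝ)) : Prop :=
  IsLatticePolytope Q ∧ (0 : Fin d → ℝ) ∈ interior Q ∧
    IsLatticePolytope (polarDual Q)

/-- A Gorenstein polytope: some dilate `kP`, translated by a lattice vector,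
is reflexive. -/
def IsGorenstein {d : ℕ} (P : Set (Fin d → ℝ)) : Prop :=
  ∃ (k : ℕ) (w : Fin d → ℝ), 1 ≤ k ∧ w ∈ latticePoints d ∧
    IsReflexive ((fun x => x - w) '' ((k : ℝ) • P))

/-- The integer decomposition property. -/
def IsIDP {d : ℕ} (P : Set (Fin d → ℝ)) : Prop :=
  ∀ k : ℕ, 1 ≤ k → ∀ x ∈ ((k : ℝ) • P) ∩ latticePoints d,
    ∃ y : Fin k → Fin d → ℝ, (∀ j, y j ∈ P ∩ latticePoints d) ∧ x = ∑ j, y j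

/-- Minkowski indecomposability of a lattice polytope. -/
def IsIndecomposable {d : ℕ} (P : Set (Fin d → ℝ)) : Prop :=
  (¬ ∃ p : Fin d → ℝ, P = {p}) ∧
  ∀ P₁ P₂ : Set (Fin d → ℝ), IsLatticePolytope P₁ → IsLatticePolytope P₂ →
    P = P₁ + P₂ → (∃ p, P₁ = {p}) ∨ (∃ p, P₂ = {p})

/-- A `(0,1)`-polytope: the convex hull of a set of `(0,1)`-vectors. -/
def Is01Polytope {d : ℕ} (P : Set (Fin d → ℝ)) : Prop :=
  ∃ V : Finset (Fin d → ℝ), (∀ v ∈ V, ∀ i, v i = 0 ∨ v i = 1) ∧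
    P = convexHull ℝ (V : Set (Fin d → ℝ))


section Helpers

lemma pairing_add {d : ℕ} (n : Fin d → ℤ) (x y : Fin d → ℝ) :
    pairing n (x + y) = pairing n x + pairing n y := by
  simp [pairing, mul_add, Finset.sum_add_distrib]

lemma pairing_sub {d : ℕ} (n : Fin d → ℤ) (x y : Fin d → ℝ) :
    pairing n (x - y) = pairing n x - pairing n y := by
  simp [pairing, mul_sub, Finset.sum_sub_distrib]

lemma pairing_smul {d : ℕ} (n : Fin d → ℤ) (c : ℝ) (x : Fin d → ℝ) :
    pairing n (c • x) = c * pairing n x := by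
  simp [pairing, Finset.mul_sum]; ring_nf
  exact Finset.sum_congr rfl fun i _ => by ring

lemma pairing_zero' {d : ℕ} (n : Fin d → ℤ) : pairing n (0 : Fin d → ℝ) = 0 := by
  simp [pairing]

lemma pairing_neg {d : ℕ} (n : Fin d → ℤ) (x : Fin d → ℝ) :
    pairing n (-x) = -pairing n x := by
  have := pairing_sub n 0 x
  simpa [pairing_zero'] using this

lemma pairing_linear {d : ℕ} (n : Fin d → ℤ) : IsLinearMap ℝ (pairing n) :=
  ⟨pairing_add n, fun c x => pairing_smul n c x⟩

lemma pairing_cont {d : ℕ} (n : Fin d → ℤ) : Continuous (pairing n) := by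
  unfold pairing
  exact continuous_finset_sum _ fun j _ => (continuous_const.mul (continuous_apply j))

lemma exists_int_pairing {d : ℕ} (n : Fin d → ℤ) {x : Fin d → ℝ}
    (hx : x ∈ latticePoints d) : ∃ z : ℤ, pairing n x = (z : ℝ) := by
  choose z hz using hx
  exact ⟨∑ i, n i * z i, by simp [pairing]; exact Finset.sum_congr rfl fun i _ => by rw [hz i]⟩

lemma int_gain {d : ℕ} (n : Fin d → ℤ) {x : Fin d → ℝ} (hx : x ∈ latticePoints d)
    {A : ℤ} (hlt : (A : ℝ) < pairing n x) : (A : ℝ) + 1 ≤ pairing n x := by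
  obtain ⟨z, hz⟩ := exists_int_pairing n hx
  rw [hz] at hlt ⊢
  exact_mod_cast Int.add_one_le_iff.mpr (by exact_mod_cast hlt)

lemma lat_add {d : ℕ} {x y : Fin d → ℝ} (hx : x ∈ latticePoints d)
    (hy : y ∈ latticePoints d) : x + y ∈ latticePoints d := by
  intro i
  obtain ⟨z1, h1⟩ := hx i; obtain ⟨z2, h2⟩ := hy i
  exact ⟨z1 + z2, by simp [h1, h2]⟩

lemma lat_sub {d : ℕ} {x y : Fin d → ℝ} (hx : x ∈ latticePoints d)
    (hy : y ∈ latticePoints d) : x - y ∈ latticePoints d := by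
  intro i
  obtain ⟨z1, h1⟩ := hx i; obtain ⟨z2, h2⟩ := hy i
  exact ⟨z1 - z2, by simp [h1, h2]⟩

lemma mem_scaled {d m : ℕ} {P : Set (Fin d → ℝ)} {n : Fin m → Fin d → ℤ} {h : Fin m → ℤ}
    (hPeq : P = {x | ∀ i, pairing (n i) x ≥ -(h i : ℝ)}) {c : ℝ} (hc : 0 < c)
    {x : Fin d → ℝ} : x ∈ c • P ↔ ∀ i, pairing (n i) x ≥ -(c * (h i : ℝ)) := by
  rw [Set.mem_smul_set_iff_inv_smul_mem₀ hc.ne']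
  rw [hPeq]
  simp only [mem_setOf_eq, pairing_smul]
  constructor
  · intro H i
    have hi := H i
    rw [ge_iff_le, inv_mul_eq_div, le_div_iff₀ hc] at hi
    linarith [hi]
  · intro H i
    rw [ge_iff_le, inv_mul_eq_div, le_div_iff₀ hc]
    linarith [H i]

lemma nonzero_normal {d m : ℕ} {n : Fin m → Fin d → ℤ}
    (hgcd : ∀ i, Finset.univ.gcd (n i) = 1) (i : Fin m) :
    0 < pairing (n i) (fun j => (n i j : ℝ)) := by
  have hne : ∃ j, n i j ≠ 0 := by
    by_contra hc
    push_neg at hc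
    have : Finset.univ.gcd (n i) = 0 := Finset.gcd_eq_zero_iff.mpr fun j _ => hc j
    rw [hgcd i] at this; exact one_ne_zero this
  obtain ⟨j₀, hj₀⟩ := hne
  have h1 : (0:ℝ) < (n i j₀ : ℝ) * (n i j₀ : ℝ) := by
    have : (n i j₀ : ℝ) ≠ 0 := Int.cast_ne_zero.mpr hj₀
    exact mul_self_pos.mpr this
  have h2 : ((n i j₀ : ℝ) * (n i j₀ : ℝ)) ≤ ∑ j, (n i j : ℝ) * (n i j : ℝ) :=
    Finset.single_le_sum (f := fun j => (n i j:ℝ)*(n i j:ℝ)) (fun j _ => mul_self_nonneg _)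
      (Finset.mem_univ j₀)
  unfold pairing
  linarith

lemma interior_scaled {d m : ℕ} {P : Set (Fin d → ℝ)} {n : Fin m → Fin d → ℤ} {h : Fin m → ℤ}
    (hPeq : P = {x | ∀ i, pairing (n i) x ≥ -(h i : ℝ)})
    (hgcd : ∀ i, Finset.univ.gcd (n i) = 1) {c : ℝ} (hc : 0 < c)
    {x : Fin d → ℝ} : x ∈ interior (c • P) ↔ ∀ i, pairing (n i) x > -(c * (h i : ℝ)) := by
  constructor
  · intro hx i
    have hmem : ∀ y ∈ interior (c • P), pairing (n i) y ≥ -(c * (h i : ℝ)) := by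
      intro y hy
      exact (mem_scaled hPeq hc).mp (interior_subset hy) i
    by_contra hcon
    push_neg at hcon
    have heq : pairing (n i) x = -(c * (h i : ℝ)) := le_antisymm hcon (hmem x hx)
    obtain ⟨ε, hε, hball⟩ := Metric.isOpen_iff.mp isOpen_interior x hx
    set g : Fin d → ℝ := fun j => (n i j : ℝ) with hg
    have hS : 0 < pairing (n i) g := nonzero_normal hgcd i
    set δ : ℝ := ε / (2 * (‖g‖ + 1)) with hδ
    have hgn : (0:ℝ) ≤ ‖g‖ := norm_nonneg _
    have hδpos : 0 < δ := by positivity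
    have hmemball : x - δ • g ∈ Metric.ball x ε := by
      rw [Metric.mem_ball, dist_eq_norm]
      have h9 : x - δ • g - x = -(δ • g) := by abel
      rw [h9, norm_neg, norm_smul, Real.norm_eq_abs, abs_of_pos hδpos]
      rw [hδ]
      rw [div_mul_eq_mul_div, div_lt_iff₀ (by positivity)]
      nlinarith
    have hin : x - δ • g ∈ c • P := interior_subset (hball hmemball)
    have := (mem_scaled hPeq hc).mp hin i
    rw [pairing_sub, pairing_smul, heq] at this
    nlinarith
  · intro hx
    have hopen : IsOpen {y : Fin d → ℝ | ∀ i, pairing (n i) y > -(c * (h i : ℝ))} := by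
      have h9 : {y : Fin d → ℝ | ∀ i, pairing (n i) y > -(c * (h i : ℝ))} =
          ⋂ i, {y | pairing (n i) y > -(c * (h i : ℝ))} := by
        ext y; simp [mem_iInter]
      rw [h9]
      exact isOpen_iInter_of_finite fun i => isOpen_lt continuous_const (pairing_cont (n i))
    have hsub : {y : Fin d → ℝ | ∀ i, pairing (n i) y > -(c * (h i : ℝ))} ⊆ c • P := by
      intro y hy
      exact (mem_scaled hPeq hc).mpr fun i => le_of_lt (hy i)
    exact interior_maximal hsub hopen hx

lemma poly_bounded {d : ℕ} {P : Set (Fin d → ℝ)} (V : Finset (Fin d → ℝ))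
    (hPV : P = convexHull ℝ (V : Set (Fin d → ℝ))) :
    ∃ M : ℝ, ∀ p ∈ P, ‖p‖ ≤ M := by
  have hcpt : IsCompact (convexHull ℝ (V : Set (Fin d → ℝ))) :=
    V.finite_toSet.isCompact_convexHull (𝕜 := ℝ)
  obtain ⟨M, hM⟩ := hcpt.isBounded.exists_norm_le
  exact ⟨M, by rw [hPV]; exact hM⟩

lemma rec_zero {d m : ℕ} {P : Set (Fin d → ℝ)} {n : Fin m → Fin d → ℤ} {h : Fin m → ℤ}
    (hPeq : P = {x | ∀ i, pairing (n i) x ≥ -(h i : ℝ)})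
    {M : ℝ} (hM : ∀ p ∈ P, ‖p‖ ≤ M)
    {v : Fin d → ℝ} (hv : ∀ i, pairing (n i) v > -(h i : ℝ))
    {w : Fin d → ℝ} (hw : ∀ i, pairing (n i) w ≥ 0) : w = 0 := by
  by_contra hwne
  have hwn : 0 < ‖w‖ := norm_pos_iff.mpr hwne
  have hvP : v ∈ P := by rw [hPeq]; exact fun i => le_of_lt (hv i)
  have hMv : ‖v‖ ≤ M := hM v hvP
  have hvnn : (0:ℝ) ≤ ‖v‖ := norm_nonneg _
  set lam : ℝ := (M + ‖v‖ + 1) / ‖w‖ with hlam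
  have hlampos : 0 < lam := div_pos (by linarith) hwn
  have hp : v + lam • w ∈ P := by
    rw [hPeq]
    intro i
    rw [pairing_add, pairing_smul]
    have := hw i
    nlinarith [hv i, mul_nonneg hlampos.le this]
  have h1 : ‖v + lam • w‖ ≤ M := hM _ hp
  have h2 : ‖lam • w‖ ≤ ‖v + lam • w‖ + ‖v‖ := by
    calc ‖lam • w‖ = ‖(v + lam • w) - v‖ := by congr 1; abel
    _ ≤ ‖v + lam • w‖ + ‖v‖ := norm_sub_le _ _
  have h3 : ‖lam • w‖ = M + ‖v‖ + 1 := by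
    rw [norm_smul, Real.norm_eq_abs, abs_of_pos hlampos, hlam,
      div_mul_cancel₀ _ hwn.ne']
  linarith

lemma m_pos {d m : ℕ} {P : Set (Fin d → ℝ)} {n : Fin m → Fin d → ℤ} {h : Fin m → ℤ}
    (hd : 1 ≤ d)
    (hPeq : P = {x | ∀ i, pairing (n i) x ≥ -(h i : ℝ)})
    {M : ℝ} (hM : ∀ p ∈ P, ‖p‖ ≤ M)
    {v : Fin d → ℝ} (hv : ∀ i, pairing (n i) v > -(h i : ℝ)) : 0 < m := by
  rcases Nat.eq_zero_or_pos m with hm | hm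
  · subst hm
    have h0 : (fun _ : Fin d => (1:ℝ)) = 0 :=
      rec_zero hPeq hM hv (fun i => i.elim0)
    have := congrFun h0 ⟨0, hd⟩
    norm_num at this
  · exact hm

lemma cone_nonneg {d m : ℕ} {P : Set (Fin d → ℝ)} {n : Fin m → Fin d → ℤ} {h : Fin m → ℤ}
    (hd : 1 ≤ d)
    (hPeq : P = {x | ∀ i, pairing (n i) x ≥ -(h i : ℝ)})
    {M : ℝ} (hM : ∀ p ∈ P, ‖p‖ ≤ M)
    {v : Fin d → ℝ} (hv : ∀ i, pairing (n i) v > -(h i : ℝ))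
    {w : Fin d → ℝ} {t : ℝ} (hw : ∀ i, pairing (n i) w ≥ -(t * (h i : ℝ)))
    (ht : t ≤ 0) : w = 0 ∧ t = 0 := by
  rcases eq_or_lt_of_le ht with ht0 | ht0
  · subst ht0
    have : w = 0 := rec_zero hPeq hM hv (fun i => by
      have := hw i; simpa using this)
    exact ⟨this, rfl⟩
  · exfalso
    have key : w - t • v = 0 := by
      apply rec_zero hPeq hM hv
      intro i
      have h1 := hw i
      have h2 := hv i
      have h9 : pairing (n i) (w - t • v) = pairing (n i) w - t * pairing (n i) v := by
        rw [pairing_sub, pairing_smul]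
      rw [h9]
      nlinarith
    have hwv : w = t • v := sub_eq_zero.mp key
    obtain ⟨i₀⟩ : Nonempty (Fin m) := ⟨⟨0, m_pos hd hPeq hM hv⟩⟩
    have h1 := hw i₀
    rw [hwv, pairing_smul] at h1
    have h2 := hv i₀
    nlinarith

end Helpers

theorem stmt_3 {d : ℕ} (hd : 1 ≤ d) (P : Set (Fin d → ℝ))
    (hP : IsLatticePolytope P) (hfull : (interior P).Nonempty)
    {m : ℕ} (n : Fin m → Fin d → ℤ) (h : Fin m → ℤ)
    (hpres : IsFacetPresentation P n h)
    (a : ℕ) (ha : IsCodegree P a)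
    (hng : NGIncl n h) :
    P ∩ latticePoints d =
      (floorPoly ((a : ℝ) • P) ∩ latticePoints d) +
        (remPoly n h a ∩ latticePoints d) := by
  obtain ⟨hPeq, hgcd, -⟩ := hpres
  obtain ⟨V, -, hPV⟩ := hP
  obtain ⟨M, hM⟩ := poly_bounded V hPV
  obtain ⟨v, hvI⟩ := hfull
  have hv : ∀ i, pairing (n i) v > -(h i : ℝ) := by
    have h1 : v ∈ interior ((1:ℝ) • P) := by rwa [one_smul]
    intro i
    have := (interior_scaled hPeq hgcd one_pos).mp h1 i
    simpa using this
  obtain ⟨i₀⟩ : Nonempty (Fin m) := ⟨⟨0, m_pos hd hPeq hM hv⟩⟩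
  have ha1 : 1 ≤ a := ha.1
  have hapos : (0:ℝ) < (a : ℝ) := by exact_mod_cast Nat.lt_of_lt_of_le Nat.zero_lt_one ha1
  obtain ⟨y₀, hy₀mem⟩ := ha.2.1
  have hy₀I : y₀ ∈ interior ((a:ℝ) • P) := hy₀mem.1
  have hy₀lat : y₀ ∈ latticePoints d := hy₀mem.2
  have hy₀ : ∀ i, pairing (n i) y₀ > -((a:ℝ) * (h i : ℝ)) :=
    (interior_scaled hPeq hgcd hapos).mp hy₀I
  have hy₀' : ∀ i, pairing (n i) y₀ ≥ -((a:ℝ) * (h i : ℝ)) + 1 := by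
    intro i
    have := int_gain (n i) hy₀lat (A := -((a:ℤ) * h i)) (by push_cast; linarith [hy₀ i])
    push_cast at this; linarith
  ext x
  simp only [Set.mem_inter_iff, Set.mem_add]
  constructor
  · rintro ⟨hxP, hxlat⟩
    have hxineq : ∀ i, pairing (n i) x ≥ -(h i : ℝ) := by rw [hPeq] at hxP; exact hxP
    have hxcone : ((x, (1:ℝ)) : (Fin d → ℝ) × ℝ) ∈
        (coneOver n h ∩ latticePairs d) \ {(0 : (Fin d → ℝ) × ℝ)} := by
      refine ⟨⟨fun i => by simpa using hxineq i, hxlat, 1, by norm_num⟩, ?_⟩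
      intro hc
      simp only [Set.mem_singleton_iff, Prod.ext_iff] at hc
      exact one_ne_zero hc.2
    obtain ⟨q, hq, r, hr, hqr⟩ := hng hxcone
    obtain ⟨hqint, hqlat1, k, hk⟩ := hq
    obtain ⟨hrant, hrlat1, l, hl⟩ := hr
    have hsum1 : q.1 + r.1 = x := congrArg Prod.fst hqr
    have hsum2 : q.2 + r.2 = 1 := congrArg Prod.snd hqr
    have hkl : k + l = 1 := by
      have : ((k + l : ℤ) : ℝ) = ((1:ℤ):ℝ) := by push_cast; rw [← hk, ← hl]; linarith [hsum2]
      exact_mod_cast this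
    -- k ≥ 1
    have hk1 : 1 ≤ k := by
      by_contra hc
      push_neg at hc
      have hq2le : q.2 ≤ 0 := by rw [hk]; exact_mod_cast Int.lt_add_one_iff.mp (by omega)
      obtain ⟨hq10, hq20⟩ := cone_nonneg hd hPeq hM hv
        (fun i => le_of_lt (hqint i)) hq2le
      have := hqint i₀
      rw [hq10, hq20, pairing_zero'] at this
      simp at this
    -- k ≥ a
    have hka : (a : ℤ) ≤ k := by
      have hk'1 : 1 ≤ k.toNat := by omega
      have hkk : ((k.toNat : ℕ) : ℝ) = q.2 := by
        have hknn : (0:ℤ) ≤ k := by omega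
        rw [hk]; exact_mod_cast Int.toNat_of_nonneg hknn
      have hqint' : q.1 ∈ interior (((k.toNat : ℕ) : ℝ) • P) := by
        refine (interior_scaled hPeq hgcd ?_).mpr fun i => by rw [hkk]; exact hqint i
        rw [hkk, hk]; exact_mod_cast (by omega : (0:ℤ) < k)
      have := ha.2.2 k.toNat hk'1 ⟨q.1, hqint', hqlat1⟩
      omega
    rcases lt_or_ge (l + (a:ℤ)) 1 with hB | hA
    · -- degenerate case: l + a ≤ 0
      have hla : l + (a:ℤ) ≤ 0 := by omega
      have hcn := cone_nonneg hd hPeq hM hv (w := r.1 + y₀) (t := r.2 + (a:ℝ))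
        (fun i => by
          rw [pairing_add]
          have h1 := hrant i
          have h2 := hy₀' i
          nlinarith [h1, h2])
        (by rw [hl]; push_cast; exact_mod_cast (by exact_mod_cast hla : ((l + (a:ℤ) : ℤ):ℝ) ≤ 0))
      have hr1 : r.1 = -y₀ := by
        have := hcn.1
        funext j
        have := congrFun this j
        simp only [Pi.add_apply, Pi.zero_apply] at this
        simp [Pi.neg_apply]; linarith
      have hr2 : r.2 = -(a:ℝ) := by linarith [hcn.2]
      refine ⟨y₀, ⟨subset_convexHull ℝ _ hy₀mem, hy₀lat⟩, x - y₀,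
        ⟨subset_convexHull ℝ _ ⟨lat_sub hxlat hy₀lat, fun i => ?_⟩, lat_sub hxlat hy₀lat⟩,
        by abel⟩
      have h1 := hrant i
      rw [hr1, pairing_neg, hr2] at h1
      rw [pairing_sub]
      have h2 := hxineq i
      nlinarith [h1, h2]
    · -- main case: k = a
      have hk_eq : k = (a : ℤ) := le_antisymm (by omega) hka
      have hq2a : q.2 = (a : ℝ) := by rw [hk, hk_eq]; push_cast; ring
      have hr2a : r.2 = 1 - (a : ℝ) := by
        rw [hl]
        have : l = 1 - (a:ℤ) := by omega
        rw [this]; push_cast; ring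
      refine ⟨q.1, ⟨subset_convexHull ℝ _ ⟨?_, hqlat1⟩, hqlat1⟩, r.1,
        ⟨subset_convexHull ℝ _ ⟨hrlat1, fun i => ?_⟩, hrlat1⟩, hsum1⟩
      · exact (interior_scaled hPeq hgcd hapos).mpr fun i => by
          have := hqint i; rw [hq2a] at this; exact this
      · have h1 := hrant i
        rw [hr2a] at h1
        nlinarith [h1]
  · rintro ⟨y, ⟨hyf, hylat⟩, z, ⟨hzr, hzlat⟩, rfl⟩
    refine ⟨?_, lat_add hylat hzlat⟩
    rw [hPeq]
    intro i
    have hy_i : pairing (n i) y ≥ -((a:ℝ) * (h i : ℝ)) + 1 := by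
      have hsub : floorPoly ((a:ℝ) • P) ⊆
          {u : Fin d → ℝ | -((a:ℝ) * (h i : ℝ)) + 1 ≤ pairing (n i) u} := by
        apply convexHull_min
        · rintro w ⟨hwI, hwlat⟩
          have hgt := (interior_scaled hPeq hgcd hapos).mp hwI i
          have := int_gain (n i) hwlat (A := -((a:ℤ) * h i)) (by push_cast; linarith)
          push_cast at this
          simp only [Set.mem_setOf_eq]
          linarith
        · exact convex_halfSpace_ge (pairing_linear (n i)) _
      exact hsub hyf
    have hz_i : pairing (n i) z ≥ ((a:ℝ) - 1) * (h i : ℝ) - 1 := by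
      have hsub : remPoly n h a ⊆
          {u : Fin d → ℝ | ((a:ℝ) - 1) * (h i : ℝ) - 1 ≤ pairing (n i) u} := by
        apply convexHull_min
        · rintro w ⟨hwlat, hwineq⟩
          exact hwineq i
        · exact convex_halfSpace_ge (pairing_linear (n i)) _
      exact hsub hzr
    rw [pairing_add]
    nlinarith [hy_i, hz_i]
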